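/- arXiv:1612.00804 — 2 statements merged into one kernel-verified Lean document; each statement's English description precedes it below -/
import Mathlib

section
/- (Oblivious algorithm guarantee.) Let l : ℝ^p → ℝ be differentiable, m_k-strongly concave and M_k-smooth on Ω_k, and m₁-strongly concave and M₁-smooth on Ω₁, with 0 < m_k ≤ m₁ ≤ M₁ ≤ M_k. Let S^{OBL} be a set of k indices maximizing Σ_{j∈S} f({j}) over all sets S of size k (the top-k singleton values), and let S* be a set of size k maximizing f. Then f(S^{OBL}) ≥ max{ m_k/(k·M₁) , (m_k·m₁/(4·M_k·M₁))·(3 + m₁/M₁) } · f(S*). -/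
open Finset

noncomputable section

/-- Number of nonzero coordinates (the "ℓ₀ norm") of a vector. -/
def spar {p : ℕ} (v : Fin p → ℝ) : ℕ := (Finset.univ.filter fun i => v i ≠ 0).card

/-- Support of a vector, as a `Finset`. -/
def suppF {p : ℕ} (v : Fin p → ℝ) : Finset (Fin p) :=
  Finset.univ.filter fun i => v i ≠ 0

/-- `Ω_k`: pairs of `k`-sparse vectors differing in at most `k` coordinates. -/
def Omega {p : ℕ} (k : ℕ) : Set ((Fin p → ℝ) × (Fin p → ℝ)) :=
  {q | spar q.1 ≤ k ∧ spar q.2 ≤ k ∧ spar (q.1 - q.2) ≤ k}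

/-- `Ω̃_k`: pairs of `k`-sparse vectors differing in at most one coordinate. -/
def OmegaT {p : ℕ} (k : ℕ) : Set ((Fin p → ℝ) × (Fin p → ℝ)) :=
  {q | spar q.1 ≤ k ∧ spar q.2 ≤ k ∧ spar (q.1 - q.2) ≤ 1}

/-- `l` is `m`-strongly concave on `Ω`. -/
def RStrongConcaveOn {p : ℕ} (l : (Fin p → ℝ) → ℝ) (m : ℝ)
    (Ω : Set ((Fin p → ℝ) × (Fin p → ℝ))) : Prop :=
  ∀ x y : Fin p → ℝ, (x, y) ∈ Ω →
    l y - l x - fderiv ℝ l x (y - x) ≤ -(m / 2) * ∑ i, (y i - x i) ^ 2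

/-- `l` is `M`-smooth on `Ω`. -/
def RSmoothOn {p : ℕ} (l : (Fin p → ℝ) → ℝ) (M : ℝ)
    (Ω : Set ((Fin p → ℝ) × (Fin p → ℝ))) : Prop :=
  ∀ x y : Fin p → ℝ, (x, y) ∈ Ω →
    -(M / 2) * ∑ i, (y i - x i) ^ 2 ≤ l y - l x - fderiv ℝ l x (y - x)

/- ### Auxiliary lemmas -/

lemma mem_suppF' {p : ℕ} {v : Fin p → ℝ} {i : Fin p} : i ∈ suppF v ↔ v i ≠ 0 := by
  simp [suppF]

lemma spar_zero' {p : ℕ} : spar (0 : Fin p → ℝ) = 0 := by simp [spar]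

lemma spar_zero_sub' {p : ℕ} (v : Fin p → ℝ) : spar ((0 : Fin p → ℝ) - v) = spar v := by
  unfold spar; congr 1; ext i; simp

lemma fderiv_coord' {p : ℕ} (l : (Fin p → ℝ) → ℝ) (v : Fin p → ℝ) :
    fderiv ℝ l 0 v = ∑ j, v j * fderiv ℝ l 0 (Pi.single j (1:ℝ) : Fin p → ℝ) := by
  have hv : v = ∑ j, v j • (Pi.single j (1 : ℝ) : Fin p → ℝ) := by
    funext i
    simp [Pi.single_apply]
  conv_lhs => rw [hv]
  rw [map_sum]
  simp [smul_eq_mul]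

/-- Oblivious algorithm guarantee. -/
theorem oblivious_guarantee
    (p : ℕ) (l : (Fin p → ℝ) → ℝ) (hl : Differentiable ℝ l)
    (β : Finset (Fin p) → (Fin p → ℝ))
    (hβsupp : ∀ S : Finset (Fin p), suppF (β S) ⊆ S)
    (hβmax : ∀ S : Finset (Fin p), ∀ v : Fin p → ℝ, suppF v ⊆ S → l v ≤ l (β S))
    (f : Finset (Fin p) → ℝ) (hf : ∀ S, f S = l (β S) - l 0)
    (k : ℕ)
    (mk m₁ M₁ Mk : ℝ) (hmk : 0 < mk) (hmkm₁ : mk ≤ m₁) (hm₁M₁ : m₁ ≤ M₁) (hM₁Mk : M₁ ≤ Mk)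
    (hconck : RStrongConcaveOn l mk (Omega k))
    (hsmoothk : RSmoothOn l Mk (Omega k))
    (hconc1 : RStrongConcaveOn l m₁ (Omega 1))
    (hsmooth1 : RSmoothOn l M₁ (Omega 1))
    (SOBL : Finset (Fin p)) (hSOBLcard : SOBL.card = k)
    (hSOBL : ∀ T : Finset (Fin p), T.card = k → ∑ j ∈ T, f {j} ≤ ∑ j ∈ SOBL, f {j})
    (Sstar : Finset (Fin p)) (hSstarcard : Sstar.card = k)
    (hSstar : ∀ T : Finset (Fin p), T.card = k → f T ≤ f Sstar) :
    max (mk / ((k : ℝ) * M₁)) (mk * m₁ / (4 * Mk * M₁) * (3 + m₁ / M₁)) * f Sstar ≤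
      f SOBL := by
  have hm₁ : 0 < m₁ := lt_of_lt_of_le hmk hmkm₁
  have hM₁ : 0 < M₁ := lt_of_lt_of_le hm₁ hm₁M₁
  have hMk : 0 < Mk := lt_of_lt_of_le hM₁ hM₁Mk
  set g : Fin p → ℝ := fun j => fderiv ℝ l 0 (Pi.single j (1:ℝ) : Fin p → ℝ) with hgdef
  have hfd : ∀ v : Fin p → ℝ, fderiv ℝ l 0 v = ∑ j, v j * g j := fun v => fderiv_coord' l v
  have hβoff : ∀ (S : Finset (Fin p)) (j : Fin p), j ∉ S → β S j = 0 := by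
    intro S j hj
    by_contra h
    exact hj (hβsupp S (mem_suppF'.mpr h))
  have hf0 : ∀ S, 0 ≤ f S := by
    intro S
    rw [hf]
    have h0 := hβmax S 0 (by simp [suppF])
    linarith
  have hmono : ∀ S T : Finset (Fin p), S ⊆ T → f S ≤ f T := by
    intro S T hST
    rw [hf, hf]
    have := hβmax T (β S) ((hβsupp S).trans hST)
    linarith
  -- Upper bound via strong concavity.
  have hub : ∀ (m : ℝ) (K : ℕ), 0 < m → RStrongConcaveOn l m (Omega K) →
      ∀ S : Finset (Fin p), S.card ≤ K → f S ≤ (∑ j ∈ S, g j ^ 2) / (2 * m) := by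
    intro m K hm hc S hS
    have hsparβ : spar (β S) ≤ K := le_trans (Finset.card_le_card (hβsupp S)) hS
    have hmem : ((0 : Fin p → ℝ), β S) ∈ Omega K :=
      ⟨by simp [Omega, spar_zero'], hsparβ, by
        show spar ((0 : Fin p → ℝ) - β S) ≤ K
        rw [spar_zero_sub']; exact hsparβ⟩
    have h := hc 0 (β S) hmem
    simp only [Pi.zero_apply, sub_zero] at h
    rw [hfd] at h
    have key : ∑ j, (β S j * g j - m / 2 * β S j ^ 2) ≤ ∑ j ∈ S, g j ^ 2 / (2 * m) := by
      rw [← Finset.sum_subset (Finset.subset_univ S)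
        (fun j _ hj => by simp [hβoff S j hj])]
      refine Finset.sum_le_sum fun j _ => ?_
      rw [le_div_iff₀ (by positivity : (0:ℝ) < 2 * m)]
      nlinarith [sq_nonneg (m * β S j - g j)]
    have hsplit : ∑ j, β S j * g j - m / 2 * ∑ i, β S i ^ 2
        = ∑ j, (β S j * g j - m / 2 * β S j ^ 2) := by
      rw [Finset.mul_sum, ← Finset.sum_sub_distrib]
    rw [hf, Finset.sum_div]
    linarith [h, key, hsplit]
  -- Lower bound via smoothness.
  have hlb : ∀ (M : ℝ) (K : ℕ), 0 < M → RSmoothOn l M (Omega K) →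
      ∀ S : Finset (Fin p), S.card ≤ K → (∑ j ∈ S, g j ^ 2) / (2 * M) ≤ f S := by
    intro M K hM hs S hS
    set v : Fin p → ℝ := fun i => if i ∈ S then g i / M else 0 with hvdef
    have hvsupp : suppF v ⊆ S := by
      intro i hi
      rw [mem_suppF'] at hi
      by_contra h
      exact hi (by simp [hvdef, h])
    have hvspar : spar v ≤ K := le_trans (Finset.card_le_card hvsupp) hS
    have hmem : ((0 : Fin p → ℝ), v) ∈ Omega K :=
      ⟨by simp [Omega, spar_zero'], hvspar, by
        show spar ((0 : Fin p → ℝ) - v) ≤ K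
        rw [spar_zero_sub']; exact hvspar⟩
    have h := hs 0 v hmem
    simp only [Pi.zero_apply, sub_zero] at h
    rw [hfd] at h
    have h1 : ∑ j, v j * g j = ∑ j ∈ S, g j ^ 2 / M := by
      rw [← Finset.sum_subset (Finset.subset_univ S)
        (fun j _ hj => by simp [hvdef, hj])]
      refine Finset.sum_congr rfl fun j hj => ?_
      simp only [hvdef, if_pos hj]
      ring
    have h2 : ∑ i, v i ^ 2 = ∑ j ∈ S, (g j / M) ^ 2 := by
      rw [← Finset.sum_subset (Finset.subset_univ S)
        (fun j _ hj => by simp [hvdef, hj])]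
      refine Finset.sum_congr rfl fun j hj => ?_
      simp only [hvdef, if_pos hj]
    have h3 : ∑ j ∈ S, g j ^ 2 / M - M / 2 * ∑ j ∈ S, (g j / M) ^ 2
        = (∑ j ∈ S, g j ^ 2) / (2 * M) := by
      rw [Finset.mul_sum, ← Finset.sum_sub_distrib, Finset.sum_div]
      refine Finset.sum_congr rfl fun j _ => ?_
      field_simp
      ring
    have hlv : l v ≤ l (β S) := hβmax S v hvsupp
    rw [hf]
    rw [h1, h2] at h
    linarith [h, h3]
  -- Specializations.
  have hA : f Sstar ≤ (∑ j ∈ Sstar, g j ^ 2) / (2 * mk) :=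
    hub mk k hmk hconck Sstar hSstarcard.le
  have hB : (∑ j ∈ SOBL, g j ^ 2) / (2 * Mk) ≤ f SOBL :=
    hlb Mk k hMk hsmoothk SOBL hSOBLcard.le
  have hsingub : ∀ j : Fin p, f {j} ≤ g j ^ 2 / (2 * m₁) := by
    intro j
    have := hub m₁ 1 hm₁ hconc1 {j} (by simp)
    simpa using this
  have hsinglb : ∀ j : Fin p, g j ^ 2 / (2 * M₁) ≤ f {j} := by
    intro j
    have := hlb M₁ 1 hM₁ hsmooth1 {j} (by simp)
    simpa using this
  have hswap : ∑ j ∈ Sstar, f {j} ≤ ∑ j ∈ SOBL, f {j} := hSOBL Sstar hSstarcard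
  have u1 : ∑ j ∈ SOBL, f {j} ≤ (∑ j ∈ SOBL, g j ^ 2) / (2 * m₁) := by
    rw [Finset.sum_div]
    exact Finset.sum_le_sum fun j _ => hsingub j
  have u2 : (∑ j ∈ Sstar, g j ^ 2) / (2 * M₁) ≤ ∑ j ∈ Sstar, f {j} := by
    rw [Finset.sum_div]
    exact Finset.sum_le_sum fun j _ => hsinglb j
  -- clear denominators
  have e1 : 2 * mk * f Sstar ≤ ∑ j ∈ Sstar, g j ^ 2 := by
    rw [le_div_iff₀ (by positivity : (0:ℝ) < 2 * mk)] at hA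
    linarith
  have e2 : 2 * m₁ * (∑ j ∈ SOBL, f {j}) ≤ ∑ j ∈ SOBL, g j ^ 2 := by
    rw [le_div_iff₀ (by positivity : (0:ℝ) < 2 * m₁)] at u1
    linarith
  have e3 : ∑ j ∈ Sstar, g j ^ 2 ≤ 2 * M₁ * (∑ j ∈ Sstar, f {j}) := by
    rw [div_le_iff₀ (by positivity : (0:ℝ) < 2 * M₁)] at u2
    linarith
  have e4 : ∑ j ∈ SOBL, g j ^ 2 ≤ 2 * Mk * f SOBL := by
    rw [div_le_iff₀ (by positivity : (0:ℝ) < 2 * Mk)] at hB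
    linarith
  -- key inequality for the second bound
  have key2 : mk * m₁ * f Sstar ≤ Mk * M₁ * f SOBL := by
    have P1 := mul_le_mul_of_nonneg_left e1 hm₁.le
    have P2 := mul_le_mul_of_nonneg_left e3 hm₁.le
    have P3 := mul_le_mul_of_nonneg_left hswap (by positivity : (0:ℝ) ≤ 2 * m₁ * M₁)
    have P4 := mul_le_mul_of_nonneg_left e2 hM₁.le
    have P5 := mul_le_mul_of_nonneg_left e4 hM₁.le
    nlinarith [P1, P2, P3, P4, P5]
  have bound2 : mk * m₁ / (4 * Mk * M₁) * (3 + m₁ / M₁) * f Sstar ≤ f SOBL := by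
    have hc4 : (3 : ℝ) + m₁ / M₁ ≤ 4 := by
      have : m₁ / M₁ ≤ 1 := (div_le_one hM₁).mpr hm₁M₁
      linarith
    have hcoeff : mk * m₁ / (4 * Mk * M₁) * (3 + m₁ / M₁) ≤ mk * m₁ / (Mk * M₁) := by
      have h1 : mk * m₁ / (4 * Mk * M₁) * (3 + m₁ / M₁) ≤ mk * m₁ / (4 * Mk * M₁) * 4 :=
        mul_le_mul_of_nonneg_left hc4 (by positivity)
      have h2 : mk * m₁ / (4 * Mk * M₁) * 4 = mk * m₁ / (Mk * M₁) := by
        field_simp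
      linarith
    have step1 : mk * m₁ / (4 * Mk * M₁) * (3 + m₁ / M₁) * f Sstar
        ≤ mk * m₁ / (Mk * M₁) * f Sstar :=
      mul_le_mul_of_nonneg_right hcoeff (hf0 Sstar)
    have step2 : mk * m₁ / (Mk * M₁) * f Sstar ≤ f SOBL := by
      rw [div_mul_eq_mul_div, div_le_iff₀ (by positivity : (0:ℝ) < Mk * M₁)]
      nlinarith [key2]
    linarith
  have bound1 : mk / ((k : ℝ) * M₁) * f Sstar ≤ f SOBL := by
    rcases Nat.eq_zero_or_pos k with hk | hk
    · subst hk
      simp only [Nat.cast_zero, zero_mul, div_zero, zero_mul]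
      exact hf0 SOBL
    · have hkpos : (0:ℝ) < (k : ℝ) := by exact_mod_cast hk
      have hsum : ∑ j ∈ SOBL, f {j} ≤ (k : ℝ) * f SOBL := by
        have : ∑ j ∈ SOBL, f {j} ≤ ∑ _j ∈ SOBL, f SOBL :=
          Finset.sum_le_sum fun j hj =>
            hmono {j} SOBL (Finset.singleton_subset_iff.mpr hj)
        rw [Finset.sum_const, nsmul_eq_mul, hSOBLcard] at this
        exact this
      have Q1 := mul_le_mul_of_nonneg_left hswap (by positivity : (0:ℝ) ≤ 2 * M₁)
      have Q2 := mul_le_mul_of_nonneg_left hsum (by positivity : (0:ℝ) ≤ 2 * M₁)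
      rw [div_mul_eq_mul_div, div_le_iff₀ (by positivity : (0:ℝ) < (k : ℝ) * M₁)]
      nlinarith [e1, e3, Q1, Q2]
  calc max (mk / ((k : ℝ) * M₁)) (mk * m₁ / (4 * Mk * M₁) * (3 + m₁ / M₁)) * f Sstar
      = max (mk / ((k : ℝ) * M₁) * f Sstar)
          (mk * m₁ / (4 * Mk * M₁) * (3 + m₁ / M₁) * f Sstar) :=
        max_mul_of_nonneg _ _ (hf0 Sstar)
    _ ≤ f SOBL := max_le bound1 bound2
end
end

section
/- (Optimal set values at smaller sparsities.) Let l : ℝ^p → ℝ be differentiable with associated set function f(S) = l(β^{(S)}) − l(0). Suppose l is m-strongly concave on Ω_k and M′-smooth on Ω̃_k, with M′/m < k′ < k. For each j, let OPT(j) = max{f(T) : |T| ≤ j} denote the optimal value at sparsity level j. Then OPT(k′) ≥ OPT(k) · Π_{j=k′+1}^{k} (1 − M′/(j·m)). -/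
open Finset

noncomputable section

lemma spar_eq {p : ℕ} (v : Fin p → ℝ) : spar v = (suppF v).card := rfl

lemma spar_le_of_supp {p : ℕ} {v : Fin p → ℝ} {S : Finset (Fin p)}
    (h : suppF v ⊆ S) : spar v ≤ S.card := by
  rw [spar_eq]; exact Finset.card_le_card h

lemma suppF_add_subset {p : ℕ} (x y : Fin p → ℝ) :
    suppF (x + y) ⊆ suppF x ∪ suppF y := by
  intro i hi
  simp only [suppF, Finset.mem_filter, Finset.mem_union, Finset.mem_univ, true_and] at *
  by_contra h
  push_neg at h
  simp [Pi.add_apply, h.1, h.2] at hi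

lemma fderiv_dir_zero {p : ℕ} (l : (Fin p → ℝ) → ℝ) (hl : Differentiable ℝ l)
    (β : Finset (Fin p) → (Fin p → ℝ))
    (hβsupp : ∀ S : Finset (Fin p), suppF (β S) ⊆ S)
    (hβmax : ∀ S : Finset (Fin p), ∀ v : Fin p → ℝ, suppF v ⊆ S → l v ≤ l (β S))
    (S : Finset (Fin p)) (v : Fin p → ℝ) (hv : suppF v ⊆ S) :
    fderiv ℝ l (β S) v = 0 := by
  have hc : HasDerivAt (fun t : ℝ => β S + t • v) v 0 := by
    simpa using ((hasDerivAt_id (0:ℝ)).smul_const v).const_add (β S)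
  have hd : HasDerivAt (fun t : ℝ => l (β S + t • v)) (fderiv ℝ l (β S) v) 0 := by
    have h1 := ((hl (β S + (0:ℝ) • v)).hasFDerivAt).comp_hasDerivAt 0 hc
    simp only [zero_smul, add_zero] at h1; exact h1
  have key : ∀ t : ℝ, (fun t : ℝ => l (β S + t • v)) t ≤ (fun t : ℝ => l (β S + t • v)) 0 := by
    intro t
    have hsub : suppF (β S + t • v) ⊆ S := by
      refine (suppF_add_subset _ _).trans (Finset.union_subset (hβsupp S) ?_)
      intro i hi
      apply hv
      simp only [suppF, Finset.mem_filter, Finset.mem_univ, true_and, Pi.smul_apply,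
        smul_eq_mul] at hi ⊢
      intro h0; simp [h0] at hi
    simpa using hβmax S _ hsub
  have hmax : IsLocalMax (fun t : ℝ => l (β S + t • v)) 0 :=
    Filter.Eventually.of_forall key
  exact hmax.hasDerivAt_eq_zero hd

/-- f S ≥ (m/2)‖β S‖². -/
lemma fS_lower {p : ℕ} (l : (Fin p → ℝ) → ℝ) (hl : Differentiable ℝ l)
    (β : Finset (Fin p) → (Fin p → ℝ))
    (hβsupp : ∀ S : Finset (Fin p), suppF (β S) ⊆ S)
    (hβmax : ∀ S : Finset (Fin p), ∀ v : Fin p → ℝ, suppF v ⊆ S → l v ≤ l (β S))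
    (k : ℕ) (m : ℝ)
    (hconc : RStrongConcaveOn l m (Omega k))
    (S : Finset (Fin p)) (hS : S.card ≤ k) :
    m / 2 * ∑ i, (β S i) ^ 2 ≤ l (β S) - l 0 := by
  have hsp : spar (β S) ≤ k := (spar_le_of_supp (hβsupp S)).trans hS
  have hmem : ((β S, (0 : Fin p → ℝ)) : _ × _) ∈ Omega (p := p) k := by
    refine ⟨hsp, ?_, ?_⟩
    · simp [spar]
    · simpa using hsp
  have h := hconc (β S) 0 hmem
  have hder : fderiv ℝ l (β S) ((0 : Fin p → ℝ) - β S) = 0 := by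
    have : fderiv ℝ l (β S) (β S) = 0 :=
      fderiv_dir_zero l hl β hβsupp hβmax S (β S) (hβsupp S)
    simp [this]
  rw [hder] at h
  have hsum : ∑ i, ((0 : Fin p → ℝ) i - β S i) ^ 2 = ∑ i, (β S i) ^ 2 := by
    apply Finset.sum_congr rfl; intro i _
    simp only [Pi.zero_apply]; ring
  rw [hsum] at h
  linarith

/-- Marginal loss bound: f S − f (S.erase i) ≤ (M'/2)(β S i)². -/
lemma marginal_bound {p : ℕ} (l : (Fin p → ℝ) → ℝ) (hl : Differentiable ℝ l)
    (β : Finset (Fin p) → (Fin p → ℝ))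
    (hβsupp : ∀ S : Finset (Fin p), suppF (β S) ⊆ S)
    (hβmax : ∀ S : Finset (Fin p), ∀ v : Fin p → ℝ, suppF v ⊆ S → l v ≤ l (β S))
    (k : ℕ) (M' : ℝ)
    (hsmooth : RSmoothOn l M' (OmegaT k))
    (S : Finset (Fin p)) (hS : S.card ≤ k) (i : Fin p) (hi : i ∈ S) :
    l (β S) - l (β (S.erase i)) ≤ M' / 2 * (β S i) ^ 2 := by
  set x := β S with hx
  set y : Fin p → ℝ := x - Pi.single i (x i) with hy
  have hyval : ∀ j, y j = if j = i then 0 else x j := by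
    intro j
    by_cases hji : j = i
    · subst hji; simp [hy]
    · simp [hy, Pi.single_apply, hji]
  have hsuppy : suppF y ⊆ S.erase i := by
    intro j hj
    simp only [suppF, Finset.mem_filter, Finset.mem_univ, true_and] at hj
    rw [hyval j] at hj
    by_cases hji : j = i
    · simp [hji] at hj
    · rw [if_neg hji] at hj
      exact Finset.mem_erase.2 ⟨hji, hβsupp S (by simp only [suppF, Finset.mem_filter, Finset.mem_univ, true_and]; exact hj)⟩
  have hspx : spar x ≤ k := (spar_le_of_supp (hβsupp S)).trans hS
  have hmem : ((x, y) : _ × _) ∈ OmegaT (p := p) k := by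
    refine ⟨hspx, ?_, ?_⟩
    · exact (spar_le_of_supp hsuppy).trans ((Finset.card_erase_le).trans hS)
    · have : suppF (x - y) ⊆ {i} := by
        intro j hj
        simp only [suppF, Finset.mem_filter, Finset.mem_univ, true_and, Pi.sub_apply] at hj
        rw [hyval j] at hj
        by_cases hji : j = i
        · simp [hji]
        · simp [if_neg hji] at hj
      simpa using spar_le_of_supp this
  have h := hsmooth x y hmem
  have hder : fderiv ℝ l x (y - x) = 0 := by
    apply fderiv_dir_zero l hl β hβsupp hβmax S
    intro j hj
    simp only [suppF, Finset.mem_filter, Finset.mem_univ, true_and, Pi.sub_apply] at hj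
    rw [hyval j] at hj
    by_cases hji : j = i
    · subst hji; exact hi
    · simp [if_neg hji] at hj
  rw [hder] at h
  have hsum : ∑ j, (y j - x j) ^ 2 = (x i) ^ 2 := by
    rw [Finset.sum_eq_single_of_mem i (Finset.mem_univ i)]
    · rw [hyval i]; simp
    · intro j _ hji
      rw [hyval j, if_neg hji]; ring
  rw [hsum] at h
  have hly : l y ≤ l (β (S.erase i)) := hβmax (S.erase i) y hsuppy
  linarith

/-- optimal set values at smaller sparsities. -/
theorem opt_values_smaller_sparsity
    (p : ℕ) (l : (Fin p → ℝ) → ℝ) (hl : Differentiable ℝ l)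
    (β : Finset (Fin p) → (Fin p → ℝ))
    (hβsupp : ∀ S : Finset (Fin p), suppF (β S) ⊆ S)
    (hβmax : ∀ S : Finset (Fin p), ∀ v : Fin p → ℝ, suppF v ⊆ S → l v ≤ l (β S))
    (f : Finset (Fin p) → ℝ) (hf : ∀ S, f S = l (β S) - l 0)
    (k k' : ℕ)
    (m M' : ℝ) (hm : 0 < m) (hM' : 0 < M')
    (hconc : RStrongConcaveOn l m (Omega k))
    (hsmooth : RSmoothOn l M' (OmegaT k))
    (hlow : M' / m < (k' : ℝ)) (hkk : k' < k)
    (OPT : ℕ → ℝ)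
    (hOPTub : ∀ j : ℕ, ∀ T : Finset (Fin p), T.card ≤ j → f T ≤ OPT j)
    (hOPTach : ∀ j : ℕ, ∃ T : Finset (Fin p), T.card ≤ j ∧ f T = OPT j) :
    OPT k * ∏ j ∈ Finset.Icc (k' + 1) k, (1 - M' / ((j : ℝ) * m)) ≤ OPT k' := by
  -- f is nonnegative (0 is feasible for every support set)
  have hf0 : ∀ S : Finset (Fin p), 0 ≤ f S := by
    intro S
    rw [hf]
    have : l 0 ≤ l (β S) := by
      apply hβmax S 0
      intro i hi; simp [suppF] at hi
    linarith
  have hOPT0 : ∀ j, 0 ≤ OPT j := fun j =>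
    (hf0 ∅).trans (hOPTub j ∅ (by simp))
  -- key step
  have step : ∀ j : ℕ, M' / m < (j : ℝ) → j ≤ k →
      (1 - M' / ((j : ℝ) * m)) * OPT j ≤ OPT (j - 1) := by
    intro j hjlow hjk
    have hjpos : 0 < j := by
      by_contra h
      push_neg at h
      interval_cases j
      simp at hjlow
      nlinarith [div_pos hM' hm]
    have hjR : (0 : ℝ) < (j : ℝ) := by exact_mod_cast hjpos
    obtain ⟨T, hTcard, hTval⟩ := hOPTach j
    by_cases hc : T.card = j
    · -- T has exactly j elements; drop the cheapest one
      have hTk : T.card ≤ k := hc ▸ hjk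
      have hTne : T.Nonempty := Finset.card_pos.1 (hc ▸ hjpos)
      have hsum : ∑ i ∈ T, (f T - f (T.erase i)) ≤ (M' / m) * f T := by
        have h1 : ∑ i ∈ T, (f T - f (T.erase i)) ≤ ∑ i ∈ T, M' / 2 * (β T i) ^ 2 := by
          apply Finset.sum_le_sum
          intro i hiT
          have := marginal_bound l hl β hβsupp hβmax k M' hsmooth T hTk i hiT
          rw [hf T, hf (T.erase i)]
          linarith
        have h2 : ∑ i ∈ T, M' / 2 * (β T i) ^ 2 ≤ ∑ i : Fin p, M' / 2 * (β T i) ^ 2 := by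
          apply Finset.sum_le_sum_of_subset_of_nonneg (Finset.subset_univ T)
          intro i _ _
          positivity
        have h3 : (m / 2) * ∑ i, (β T i) ^ 2 ≤ f T := by
          rw [hf T]
          exact fS_lower l hl β hβsupp hβmax k m hconc T hTk
        have h4 : ∑ i : Fin p, M' / 2 * (β T i) ^ 2 = (M' / m) * ((m / 2) * ∑ i, (β T i) ^ 2) := by
          rw [← Finset.mul_sum]
          field_simp
        have h5 : (M' / m) * ((m / 2) * ∑ i, (β T i) ^ 2) ≤ (M' / m) * f T :=
          mul_le_mul_of_nonneg_left h3 (le_of_lt (div_pos hM' hm))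
        linarith
      obtain ⟨i, hiT, hile⟩ := Finset.exists_le_of_sum_le hTne
        (by
          rw [Finset.sum_const, hc]
          calc ∑ i ∈ T, (f T - f (T.erase i)) ≤ (M' / m) * f T := hsum
          _ = j • ((M' / m) * f T / j) := by
              rw [nsmul_eq_mul]
              field_simp
          : ∑ i ∈ T, (f T - f (T.erase i)) ≤ ∑ _i ∈ T, ((M' / m) * f T / j))
      have h1 : f (T.erase i) ≤ OPT (j - 1) := by
        apply hOPTub
        rw [Finset.card_erase_of_mem hiT, hc]
      have heq : (1 - M' / ((j : ℝ) * m)) * f T = f T - (M' / m) * f T / (j : ℝ) := by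
        field_simp
      rw [← hTval]
      linarith
    · -- T has fewer than j elements
      have hTle : T.card ≤ j - 1 := by omega
      have h1 : OPT j ≤ OPT (j - 1) := hTval ▸ hOPTub (j - 1) T hTle
      have hfac : M' / ((j : ℝ) * m) > 0 := div_pos hM' (by positivity)
      nlinarith [hOPT0 j]
  -- downward induction
  have main : ∀ n, k' ≤ n → n ≤ k →
      OPT n * ∏ j ∈ Finset.Icc (k' + 1) n, (1 - M' / ((j : ℝ) * m)) ≤ OPT k' := by
    intro n hn
    induction n, hn using Nat.le_induction with
    | base =>
      intro _
      rw [Finset.Icc_eq_empty (by omega)]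
      simp
    | succ n hn ih =>
      intro hnk
      have hprodpos : (0 : ℝ) < ∏ j ∈ Finset.Icc (k' + 1) n, (1 - M' / ((j : ℝ) * m)) := by
        apply Finset.prod_pos
        intro j hj
        have hj1 : k' + 1 ≤ j := (Finset.mem_Icc.1 hj).1
        have hjR : M' / m < (j : ℝ) := lt_of_lt_of_le hlow (by exact_mod_cast Nat.le_of_succ_le hj1)
        have : M' < (j : ℝ) * m := by
          rw [div_lt_iff₀ hm] at hjR
          linarith [hjR]
        have hjm : (0:ℝ) < (j:ℝ) * m := lt_trans hM' this
        have : M' / ((j : ℝ) * m) < 1 := (div_lt_one hjm).2 this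
        linarith
      rw [Finset.prod_Icc_succ_top (by omega : k' + 1 ≤ n + 1)]
      have hstep := step (n + 1)
        (by push_cast; exact lt_of_lt_of_le hlow (by exact_mod_cast Nat.le_succ_of_le hn))
        hnk
      simp only [Nat.add_sub_cancel] at hstep
      calc OPT (n + 1) * ((∏ j ∈ Finset.Icc (k' + 1) n, (1 - M' / ((j : ℝ) * m))) *
              (1 - M' / (((n + 1 : ℕ) : ℝ) * m)))
          = ((1 - M' / (((n + 1 : ℕ) : ℝ) * m)) * OPT (n + 1)) *
              ∏ j ∈ Finset.Icc (k' + 1) n, (1 - M' / ((j : ℝ) * m)) := by ring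
        _ ≤ OPT n * ∏ j ∈ Finset.Icc (k' + 1) n, (1 - M' / ((j : ℝ) * m)) := by
            apply mul_le_mul_of_nonneg_right _ hprodpos.le
            exact_mod_cast hstep
        _ ≤ OPT k' := ih (by omega)
  exact main k (le_of_lt hkk) le_rfl
end
end
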